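/- Böttcher's Theorem (existence): Let f(z) = Σ_{j≥n} a_j z^j with a_n ≠ 0 and n ≥ 2 be analytic on Δ_{δ_0}. Then there exist δ > 0 and an injective holomorphic map φ : Δ_δ → ℂ with φ(0) = 0 such that f(φ(z)) = φ(z^n) for all z ∈ Δ_δ. -/

import Mathlib

open Metric Complex

noncomputable def bproj (δ : ℝ) (z : ℂ) : ℂ := ((min 1 (δ * ‖z‖⁻¹) : ℝ) : ℂ) * z

lemma bproj_eq_self {δ : ℝ} {z : ℂ} (hz : ‖z‖ ≤ δ) : bproj δ z = z := by
  rcases eq_or_ne z 0 with rfl | hz0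
  · simp [bproj]
  · have hzn : (0:ℝ) < ‖z‖ := norm_pos_iff.mpr hz0
    have h1 : (1:ℝ) ≤ δ * ‖z‖⁻¹ := by
      rw [le_mul_inv_iff₀ hzn, one_mul]; exact hz
    rw [bproj, min_eq_left h1]
    simp

lemma bproj_norm_le {δ : ℝ} (hδ : 0 < δ) (z : ℂ) : ‖bproj δ z‖ ≤ δ := by
  rcases le_or_gt ‖z‖ δ with h | h
  · rw [bproj_eq_self h]; exact h
  · have hzn : (0:ℝ) < ‖z‖ := lt_trans hδ h
    have h1 : δ * ‖z‖⁻¹ ≤ 1 := by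
      rw [mul_inv_le_iff₀ hzn, one_mul]; exact le_of_lt h
    have h0 : (0:ℝ) ≤ δ * ‖z‖⁻¹ := by positivity
    rw [bproj, norm_mul, Complex.norm_real, Real.norm_eq_abs, _root_.abs_of_nonneg (le_min zero_le_one h0),
      min_eq_right h1, mul_assoc, inv_mul_cancel₀ (ne_of_gt hzn), mul_one]

lemma bproj_continuous {δ : ℝ} (hδ : 0 < δ) : Continuous (bproj δ) := by
  rw [continuous_iff_continuousAt]
  intro z
  rcases lt_or_ge ‖z‖ δ with h | h
  · have hev : ∀ᶠ y in nhds z, bproj δ y = y := by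
      filter_upwards [Filter.Tendsto.eventually_lt_const h (continuous_norm.tendsto z)] with y hy
      exact bproj_eq_self (le_of_lt hy)
    exact continuousAt_id.congr (hev.mono fun y hy => hy.symm)
  · have hz0 : z ≠ 0 := by
      intro h0; rw [h0, norm_zero] at h; linarith
    have hzn : ‖z‖ ≠ 0 := norm_ne_zero_iff.mpr hz0
    apply ContinuousAt.mul _ continuousAt_id
    exact (Complex.continuous_ofReal.continuousAt).comp
      ((continuousAt_const.min ((continuousAt_const.mul ((continuous_norm.continuousAt).inv₀ hzn)))))

lemma exp_lip {M : ℝ} (hM : 0 ≤ M) {a b : ℂ} (ha : ‖a‖ ≤ M) (hb : ‖b‖ ≤ M) :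
    ‖Complex.exp a - Complex.exp b‖ ≤ Real.exp M * ‖a - b‖ := by
  have hdiff : ∀ x ∈ closedBall (0:ℂ) M, DifferentiableAt ℂ Complex.exp x :=
    fun x _ => Complex.differentiable_exp x
  have hbound : ∀ x ∈ closedBall (0:ℂ) M, ‖deriv Complex.exp x‖ ≤ Real.exp M := by
    intro x hx
    rw [Complex.deriv_exp, Complex.norm_exp]
    apply Real.exp_le_exp.mpr
    calc x.re ≤ |x.re| := le_abs_self _
    _ ≤ ‖x‖ := Complex.abs_re_le_norm x
    _ ≤ M := by rwa [← mem_closedBall_zero_iff]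
  exact (convex_closedBall (0:ℂ) M).norm_image_sub_le_of_norm_deriv_le hdiff hbound
    (mem_closedBall_zero_iff.mpr hb) (mem_closedBall_zero_iff.mpr ha)

lemma log_norm_bound {x : ℂ} (hx : ‖x - 1‖ ≤ 1/2) : ‖Complex.log x‖ ≤ Real.log 2 + Real.pi := by
  have h1 : (1:ℝ)/2 ≤ ‖x‖ := by
    have := norm_sub_norm_le (1:ℂ) x
    rw [norm_one, norm_sub_rev] at this
    linarith
  have h2 : ‖x‖ ≤ 2 := by
    have := norm_le_norm_add_norm_sub' x (1:ℂ)
    rw [norm_one] at this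
    linarith
  rw [Complex.log]
  refine le_trans (norm_add_le _ _) (add_le_add ?_ ?_)
  · rw [Complex.norm_real, Real.norm_eq_abs]
    rw [abs_le]
    constructor
    · have hlog : Real.log 2⁻¹ ≤ Real.log ‖x‖ :=
        Real.log_le_log (by norm_num) (by norm_num; linarith)
      rw [Real.log_inv] at hlog
      linarith
    · exact Real.log_le_log (by linarith) h2
  · rw [norm_mul, Complex.norm_I, mul_one, Complex.norm_real, Real.norm_eq_abs]
    exact Complex.abs_arg_le_pi x

lemma mem_slit {x : ℂ} (hx : ‖x - 1‖ ≤ 1/2) : x ∈ Complex.slitPlane := by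
  have : |(x - 1).re| ≤ 1/2 := le_trans (Complex.abs_re_le_norm _) hx
  have hre : (1:ℝ)/2 ≤ x.re := by
    have h := abs_le.mp this
    simp only [Complex.sub_re, Complex.one_re] at h
    linarith [h.1]
  exact Or.inl (by linarith)

set_option maxHeartbeats 1000000 in
set_option synthInstance.maxHeartbeats 400000 in
theorem boettcher_existence
    (f g : ℂ → ℂ) (δ₀ : ℝ) (hδ₀ : 0 < δ₀) (n : ℕ) (hn : 2 ≤ n)
    (hg : DifferentiableOn ℂ g (ball (0:ℂ) δ₀))
    (hg0 : g 0 ≠ 0)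
    (hf : ∀ z ∈ ball (0:ℂ) δ₀, f z = z ^ n * g z) :
    ∃ δ : ℝ, 0 < δ ∧ ∃ φ : ℂ → ℂ,
      DifferentiableOn ℂ φ (ball (0:ℂ) δ) ∧
      Set.InjOn φ (ball (0:ℂ) δ) ∧
      φ 0 = 0 ∧
      ∀ z ∈ ball (0:ℂ) δ, f (φ z) = φ (z ^ n) := by
  have hg0' : (0:ℝ) < ‖g 0‖ := norm_pos_iff.mpr hg0
  have hn0 : n ≠ 0 := by omega
  have hn1 : n - 1 ≠ 0 := by omega
  have hn2 : (2:ℝ) ≤ (n:ℝ) := by exact_mod_cast hn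
  have hnpos : (0:ℝ) < (n:ℝ) := by positivity
  -- the constant c with c^(n-1) = (g 0)⁻¹
  set c : ℂ := (g 0)⁻¹ ^ (((n - 1 : ℕ) : ℂ)⁻¹) with hc_def
  have hc_pow : c ^ (n - 1) = (g 0)⁻¹ := Complex.cpow_nat_inv_pow _ hn1
  have hc : c ≠ 0 := by
    intro h
    have h2 : ((g 0)⁻¹ : ℂ) = 0 := by rw [← hc_pow, h, zero_pow hn1]
    exact inv_ne_zero hg0 h2
  -- radius r1 where g is close to g 0
  have hgc : ContinuousAt g 0 :=
    (hg.differentiableAt (isOpen_ball.mem_nhds (mem_ball_self hδ₀))).continuousAt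
  obtain ⟨r, hr0, hr⟩ := Metric.continuousAt_iff.mp hgc (‖g 0‖ / 2) (by positivity)
  set r1 : ℝ := min r δ₀ / 2 with hr1_def
  have hrr : min r δ₀ ≤ r := min_le_left _ _
  have hrδ : min r δ₀ ≤ δ₀ := min_le_right _ _
  have hrmin : 0 < min r δ₀ := lt_min hr0 hδ₀
  have hr1_pos : 0 < r1 := by rw [hr1_def]; positivity
  have hr1_lt : r1 < δ₀ := by rw [hr1_def]; linarith
  have hball1 : closedBall (0:ℂ) r1 ⊆ ball (0:ℂ) δ₀ := closedBall_subset_ball hr1_lt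
  have hgclose : ∀ w ∈ closedBall (0:ℂ) r1, ‖g w - g 0‖ ≤ ‖g 0‖ / 2 := by
    intro w hw
    rw [mem_closedBall] at hw
    have hw' : dist w 0 < r := by rw [hr1_def] at hw; linarith
    have := hr hw'
    rw [dist_eq_norm] at this
    linarith
  have hgne : ∀ w ∈ closedBall (0:ℂ) r1, g w ≠ 0 := by
    intro w hw h0
    have := hgclose w hw
    rw [h0, zero_sub, norm_neg] at this
    linarith
  have hgq : ∀ w ∈ closedBall (0:ℂ) r1, ‖g w / g 0 - 1‖ ≤ 1/2 := by
    intro w hw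
    have h1 : g w / g 0 - 1 = (g w - g 0) / g 0 := by field_simp
    rw [h1, norm_div, div_le_iff₀ hg0']
    have := hgclose w hw
    linarith
  -- the map G
  set G : ℂ → ℂ := fun w => Complex.log (g w / g 0) with hG_def
  have hGdiffAt : ∀ w ∈ ball (0:ℂ) r1, DifferentiableAt ℂ G w := by
    intro w hw
    have hw' : w ∈ closedBall (0:ℂ) r1 := ball_subset_closedBall hw
    have hd : DifferentiableAt ℂ (fun w => g w / g 0) w :=
      (hg.differentiableAt (isOpen_ball.mem_nhds (hball1 hw'))).div_const _
    exact (Complex.differentiableAt_log (mem_slit (hgq w hw'))).comp w hd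
  have hGdiff : DifferentiableOn ℂ G (ball (0:ℂ) r1) :=
    fun w hw => (hGdiffAt w hw).differentiableWithinAt
  set B : ℝ := Real.log 2 + Real.pi with hB_def
  have hB : 0 < B := by
    have h1 := Real.pi_pos
    have h2 := Real.log_pos (by norm_num : (1:ℝ) < 2)
    rw [hB_def]; linarith
  have hGbound : ∀ w ∈ closedBall (0:ℂ) r1, ‖G w‖ ≤ B := fun w hw => log_norm_bound (hgq w hw)
  have hG0 : G 0 = 0 := by
    simp only [hG_def, div_self hg0, Complex.log_one]
  set E : ℝ := Real.exp B with hE_def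
  have hE1 : 0 < E := Real.exp_pos _
  -- Lipschitz constant for G on closedBall r2
  set r2 : ℝ := r1 / 2 with hr2_def
  have hr2_pos : 0 < r2 := by rw [hr2_def]; positivity
  have hr2r1 : r2 < r1 := by rw [hr2_def]; linarith
  have hsub2 : closedBall (0:ℂ) r2 ⊆ ball (0:ℂ) r1 := closedBall_subset_ball hr2r1
  obtain ⟨L0, hL0⟩ := (isCompact_closedBall (0:ℂ) r2).exists_bound_of_continuousOn
    (((hGdiff.analyticOnNhd isOpen_ball).deriv).continuousOn.mono hsub2)
  set L : ℝ := max L0 0 with hL_def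
  have hL_nonneg : 0 ≤ L := le_max_right _ _
  have hGlip : ∀ a ∈ closedBall (0:ℂ) r2, ∀ b ∈ closedBall (0:ℂ) r2,
      ‖G a - G b‖ ≤ L * ‖a - b‖ := by
    intro a ha b hb
    exact (convex_closedBall (0:ℂ) r2).norm_image_sub_le_of_norm_deriv_le
      (fun x hx => hGdiffAt x (hsub2 hx))
      (fun x hx => le_trans (hL0 x hx) (le_max_left _ _)) hb ha
  -- the radius δ
  set A : ℝ := ‖c‖ * E with hA_def
  have hA : 0 < A := mul_pos (norm_pos_iff.mpr hc) hE1
  set δ : ℝ := min 1 (min (r2 / A) (1 / (2 * (L + 1) * A))) with hδ_def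
  have hδpos : 0 < δ := by
    apply lt_min one_pos
    exact lt_min (by positivity) (by positivity)
  have hδ1 : δ ≤ 1 := min_le_left _ _
  have hδA : A * δ ≤ r2 := by
    have h : δ ≤ r2 / A := le_trans (min_le_right _ _) (min_le_left _ _)
    rw [le_div_iff₀ hA] at h
    linarith [h]
  have hδAr1 : A * δ ≤ r1 := le_trans hδA (by linarith)
  have hδAr1' : A * δ < r1 := lt_of_le_of_lt hδA hr2r1
  have hδL : L * (A * δ) ≤ 1 / 2 := by
    have h : δ ≤ 1 / (2 * (L + 1) * A) := le_trans (min_le_right _ _) (min_le_right _ _)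
    rw [le_div_iff₀ (by positivity)] at h
    nlinarith [mul_pos hA hδpos]
  -- projection onto the closed ball of radius δ
  set pr : ℂ → ℂ := bproj δ with hpr_def
  have hpr_self : ∀ z : ℂ, ‖z‖ ≤ δ → pr z = z := fun z hz => bproj_eq_self hz
  have hpr_le : ∀ z : ℂ, ‖pr z‖ ≤ δ := bproj_norm_le hδpos
  have hpr_cont : Continuous pr := bproj_continuous hδpos
  -- norm estimates
  have hexp_le : ∀ t : ℂ, ‖t‖ ≤ B → ‖Complex.exp t‖ ≤ E := by
    intro t ht
    rw [Complex.norm_exp]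
    exact Real.exp_le_exp.mpr
      (le_trans (le_trans (le_abs_self _) (Complex.abs_re_le_norm t)) ht)
  have hΦ_norm : ∀ u t : ℂ, ‖u‖ ≤ δ → ‖t‖ ≤ B → ‖c * u * Complex.exp t‖ ≤ A * δ := by
    intro u t hu ht
    rw [norm_mul, norm_mul]
    calc ‖c‖ * ‖u‖ * ‖Complex.exp t‖ ≤ ‖c‖ * δ * E := by
          apply mul_le_mul (mul_le_mul_of_nonneg_left hu (norm_nonneg c)) (hexp_le t ht)
            (norm_nonneg _) (by positivity)
      _ = A * δ := by rw [hA_def]; ring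
  -- the operator
  set Tfun : (ℂ → ℂ) → ℂ → ℂ :=
    fun v z => (v ((pr z)^n) - G (c * pr z * Complex.exp (v (pr z)))) / n with hT_def
  have hΦ_mem : ∀ (v : BoundedContinuousFunction ℂ ℂ), ‖v‖ ≤ B → ∀ z : ℂ,
      ‖c * pr z * Complex.exp (v (pr z))‖ ≤ A * δ :=
    fun v hv z => hΦ_norm _ _ (hpr_le z) (le_trans (v.norm_coe_le_norm _) hv)
  have hTcont : ∀ v : BoundedContinuousFunction ℂ ℂ, ‖v‖ ≤ B → Continuous (Tfun v) := by
    intro v hv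
    rw [continuous_iff_continuousAt]
    intro z
    apply ContinuousAt.div_const
    apply ContinuousAt.sub
    · exact (v.continuous.comp (hpr_cont.pow n)).continuousAt
    · have hΦc : Continuous (fun z => c * pr z * Complex.exp (v (pr z))) :=
        (continuous_const.mul hpr_cont).mul ((v.continuous.comp hpr_cont).cexp)
      have hmem : (c * pr z * Complex.exp (v (pr z))) ∈ ball (0:ℂ) r1 :=
        mem_ball_zero_iff.mpr (lt_of_le_of_lt (hΦ_mem v hv z) hδAr1')
      exact ContinuousAt.comp (x := z) (f := fun z => c * pr z * Complex.exp (v (pr z)))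
        (hGdiffAt _ hmem).continuousAt hΦc.continuousAt
  have hTbound : ∀ v : BoundedContinuousFunction ℂ ℂ, ‖v‖ ≤ B → ∀ z, ‖Tfun v z‖ ≤ B := by
    intro v hv z
    have h1 : ‖v ((pr z)^n)‖ ≤ B := le_trans (v.norm_coe_le_norm _) hv
    have h2 : ‖G (c * pr z * Complex.exp (v (pr z)))‖ ≤ B := by
      apply hGbound
      exact mem_closedBall_zero_iff.mpr (le_trans (hΦ_mem v hv z) hδAr1)
    simp only [hT_def]
    rw [norm_div, Complex.norm_natCast, div_le_iff₀ hnpos]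
    have := norm_sub_le (v ((pr z)^n)) (G (c * pr z * Complex.exp (v (pr z))))
    nlinarith
  have hT0 : ∀ v : BoundedContinuousFunction ℂ ℂ, v 0 = 0 → Tfun v 0 = 0 := by
    intro v hv0
    have hpr0 : pr 0 = 0 := hpr_self 0 (by simpa using le_of_lt hδpos)
    simp [hT_def, hpr0, zero_pow hn0, hv0, hG0]
  have hTdiff : ∀ v : BoundedContinuousFunction ℂ ℂ, ‖v‖ ≤ B → DifferentiableOn ℂ v (ball (0:ℂ) δ) →
      DifferentiableOn ℂ (Tfun v) (ball (0:ℂ) δ) := by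
    intro v hvB hvd
    have hmap1 : Set.MapsTo (fun z : ℂ => z ^ n) (ball (0:ℂ) δ) (ball (0:ℂ) δ) := by
      intro z hz
      rw [mem_ball_zero_iff] at hz ⊢
      calc ‖z ^ n‖ = ‖z‖ ^ n := norm_pow z n
        _ ≤ ‖z‖ := pow_le_of_le_one (norm_nonneg z) (le_trans (le_of_lt hz) hδ1) hn0
        _ < δ := hz
    have d1 : DifferentiableOn ℂ (fun z => v (z ^ n)) (ball (0:ℂ) δ) :=
      hvd.comp ((differentiable_pow n).differentiableOn) hmap1
    have hmap2 : Set.MapsTo (fun z : ℂ => c * z * Complex.exp (v z))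
        (ball (0:ℂ) δ) (ball (0:ℂ) r1) := by
      intro z hz
      rw [mem_ball_zero_iff] at hz ⊢
      have h := hΦ_norm z (v z) (le_of_lt hz) (le_trans (v.norm_coe_le_norm _) hvB)
      exact lt_of_le_of_lt h hδAr1'
    have d2 : DifferentiableOn ℂ (fun z => G (c * z * Complex.exp (v z))) (ball (0:ℂ) δ) :=
      hGdiff.comp (((differentiableOn_const c).mul differentiableOn_id).mul hvd.cexp) hmap2
    apply DifferentiableOn.congr ((d1.sub d2).div_const (n:ℂ))
    intro z hz
    have hprz : pr z = z := hpr_self z (le_of_lt (mem_ball_zero_iff.mp hz))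
    simp only [hT_def, hprz, Pi.sub_apply]
  -- the space S
  set S : Set (BoundedContinuousFunction ℂ ℂ) :=
    {v | ‖v‖ ≤ B} ∩ ({v | v 0 = 0} ∩ {v | DifferentiableOn ℂ v (ball (0:ℂ) δ)}) with hS_def
  have hSclosed : IsClosed S := by
    refine IsClosed.inter ?_ (IsClosed.inter ?_ ?_)
    · exact isClosed_le continuous_norm continuous_const
    · exact isClosed_eq (continuous_eval_const (0:ℂ)) continuous_const
    · apply IsSeqClosed.isClosed
      intro u v hu huv
      have ht : TendstoUniformly (fun k => (u k : ℂ → ℂ)) v Filter.atTop :=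
        BoundedContinuousFunction.tendsto_iff_tendstoUniformly.mp huv
      exact ((ht.tendstoUniformlyOn (s := ball (0:ℂ) δ)).tendstoLocallyUniformlyOn).differentiableOn
        (Filter.Eventually.of_forall hu) isOpen_ball
  haveI : CompleteSpace S := hSclosed.completeSpace_coe
  haveI : Nonempty S := by
    refine ⟨⟨0, ?_, ?_, ?_⟩⟩
    · simp only [Set.mem_setOf_eq, norm_zero]; exact le_of_lt hB
    · simp
    · simp only [Set.mem_setOf_eq, BoundedContinuousFunction.coe_zero]
      exact (differentiable_const (0:ℂ)).differentiableOn
  -- the contraction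
  set F : S → S := fun v =>
    ⟨BoundedContinuousFunction.ofNormedAddCommGroup (Tfun v.1) (hTcont v.1 v.2.1) B
        (hTbound v.1 v.2.1),
     BoundedContinuousFunction.norm_ofNormedAddCommGroup_le _ (le_of_lt hB) _,
     hT0 v.1 v.2.2.1,
     hTdiff v.1 v.2.1 v.2.2.2⟩ with hF_def
  have hdist : ∀ x y : S, dist (F x) (F y) ≤ 3/4 * dist x y := by
    intro x y
    rw [Subtype.dist_eq, Subtype.dist_eq]
    have hd0 : (0:ℝ) ≤ dist x.1 y.1 := dist_nonneg
    rw [BoundedContinuousFunction.dist_le (by positivity)]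
    intro z
    simp only [hF_def, BoundedContinuousFunction.coe_ofNormedAddCommGroup]
    set w := pr z with hw_def
    have hw : ‖w‖ ≤ δ := hpr_le z
    have ht1 : ‖x.1 w‖ ≤ B := le_trans (x.1.norm_coe_le_norm _) x.2.1
    have ht2 : ‖y.1 w‖ ≤ B := le_trans (y.1.norm_coe_le_norm _) y.2.1
    have hΦ1 : (c * w * Complex.exp (x.1 w)) ∈ closedBall (0:ℂ) r2 :=
      mem_closedBall_zero_iff.mpr (le_trans (hΦ_norm w _ hw ht1) hδA)
    have hΦ2 : (c * w * Complex.exp (y.1 w)) ∈ closedBall (0:ℂ) r2 :=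
      mem_closedBall_zero_iff.mpr (le_trans (hΦ_norm w _ hw ht2) hδA)
    have key1 : ‖x.1 (w^n) - y.1 (w^n)‖ ≤ dist x.1 y.1 := by
      rw [← dist_eq_norm]; exact BoundedContinuousFunction.dist_coe_le_dist _
    have key3 : ‖x.1 w - y.1 w‖ ≤ dist x.1 y.1 := by
      rw [← dist_eq_norm]; exact BoundedContinuousFunction.dist_coe_le_dist _
    have key2 : ‖(c * w * Complex.exp (x.1 w)) - (c * w * Complex.exp (y.1 w))‖
        ≤ A * δ * ‖x.1 w - y.1 w‖ := by
      have he : (c * w * Complex.exp (x.1 w)) - (c * w * Complex.exp (y.1 w))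
          = c * w * (Complex.exp (x.1 w) - Complex.exp (y.1 w)) := by ring
      rw [he, norm_mul, norm_mul]
      calc ‖c‖ * ‖w‖ * ‖Complex.exp (x.1 w) - Complex.exp (y.1 w)‖
          ≤ ‖c‖ * δ * (E * ‖x.1 w - y.1 w‖) := by
            apply mul_le_mul (mul_le_mul_of_nonneg_left hw (norm_nonneg c))
              (exp_lip (le_of_lt hB) ht1 ht2) (norm_nonneg _) (by positivity)
        _ = A * δ * ‖x.1 w - y.1 w‖ := by rw [hA_def]; ring
    have key4 : ‖G (c * w * Complex.exp (x.1 w)) - G (c * w * Complex.exp (y.1 w))‖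
        ≤ L * (A * δ) * dist x.1 y.1 := by
      calc ‖G (c * w * Complex.exp (x.1 w)) - G (c * w * Complex.exp (y.1 w))‖
          ≤ L * ‖(c * w * Complex.exp (x.1 w)) - (c * w * Complex.exp (y.1 w))‖ :=
            hGlip _ hΦ1 _ hΦ2
        _ ≤ L * (A * δ * ‖x.1 w - y.1 w‖) :=
            mul_le_mul_of_nonneg_left key2 hL_nonneg
        _ ≤ L * (A * δ) * dist x.1 y.1 := by
            have h5 : A * δ * ‖x.1 w - y.1 w‖ ≤ A * δ * dist x.1 y.1 :=
              mul_le_mul_of_nonneg_left key3 (by positivity)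
            nlinarith [hL_nonneg]
    have heq : Tfun x.1 z - Tfun y.1 z
        = ((x.1 (w^n) - y.1 (w^n)) - (G (c * w * Complex.exp (x.1 w))
            - G (c * w * Complex.exp (y.1 w)))) / n := by
      simp only [hT_def, ← hw_def]
      ring
    rw [dist_eq_norm, heq, norm_div, Complex.norm_natCast, div_le_iff₀ hnpos]
    have hstep := norm_sub_le (x.1 (w^n) - y.1 (w^n))
      (G (c * w * Complex.exp (x.1 w)) - G (c * w * Complex.exp (y.1 w)))
    have hhalf : L * (A * δ) * dist x.1 y.1 ≤ (1/2) * dist x.1 y.1 :=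
      mul_le_mul_of_nonneg_right hδL hd0
    nlinarith [key1, key4]
  have hcontr : ContractingWith (3/4 : NNReal) F := by
    constructor
    · rw [← NNReal.coe_lt_coe]
      norm_num
    · apply LipschitzWith.of_dist_le_mul
      intro x y
      have h34 : ((3/4 : NNReal) : ℝ) = 3/4 := by norm_num
      rw [h34]
      exact hdist x y
  set V : S := ContractingWith.fixedPoint F hcontr with hV_def
  have hVfix : F V = V := hcontr.fixedPoint_isFixedPt
  obtain ⟨hvB, hv0, hvd⟩ := V.2
  have hfix : ∀ z : ℂ, Tfun V.1 z = V.1 z := by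
    intro z
    have h := congrArg (fun u : S => (u.1 : ℂ → ℂ) z) hVfix
    simpa [hF_def] using h
  set v : BoundedContinuousFunction ℂ ℂ := V.1 with hv_def
  -- the map φ
  set φ : ℂ → ℂ := fun z => c * z * Complex.exp (v z) with hφ_def
  have hφdiff : DifferentiableOn ℂ φ (ball (0:ℂ) δ) := by
    simp only [hφ_def]
    exact ((differentiableOn_const c).mul differentiableOn_id).mul hvd.cexp
  have hφ0 : φ 0 = 0 := by simp [hφ_def]
  -- functional equation on ball δ
  have hfe : ∀ z ∈ ball (0:ℂ) δ, f (φ z) = φ (z^n) := by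
    intro z hz
    have hzn : ‖z‖ ≤ δ := le_of_lt (mem_ball_zero_iff.mp hz)
    have hprz : pr z = z := hpr_self z hzn
    have hvz : ‖v z‖ ≤ B := le_trans (v.norm_coe_le_norm z) hvB
    have hφnorm : ‖φ z‖ ≤ A * δ := by
      simp only [hφ_def]; exact hΦ_norm z (v z) hzn hvz
    have hφr1 : φ z ∈ closedBall (0:ℂ) r1 :=
      mem_closedBall_zero_iff.mpr (le_trans hφnorm hδAr1)
    have hφδ₀ : φ z ∈ ball (0:ℂ) δ₀ := hball1 hφr1
    have hgφ : g (φ z) ≠ 0 := hgne _ hφr1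
    have hn' : (n:ℂ) ≠ 0 := Nat.cast_ne_zero.mpr hn0
    have hvzn : v (z^n) = n * v z + G (φ z) := by
      have h := hfix z
      simp only [hT_def, hprz] at h
      rw [div_eq_iff hn'] at h
      simp only [hφ_def]
      linear_combination h
    have hexpG : Complex.exp (G (φ z)) = g (φ z) / g 0 := by
      simp only [hG_def]
      exact Complex.exp_log (div_ne_zero hgφ hg0)
    have hrhs : φ (z^n) = c * z^n * (Complex.exp (v z))^n * (g (φ z) / g 0) := by
      calc φ (z^n) = c * z^n * Complex.exp (v (z^n)) := by rw [hφ_def]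
        _ = c * z^n * (Complex.exp (v z))^n * (g (φ z) / g 0) := by
            rw [hvzn, Complex.exp_add, Complex.exp_nat_mul, hexpG]
            ring
    have hlhs : f (φ z) = c^n * z^n * (Complex.exp (v z))^n * g (φ z) := by
      rw [hf _ hφδ₀]
      calc (φ z)^n * g (φ z) = (c * z * Complex.exp (v z))^n * g (φ z) := by rw [hφ_def]
        _ = c^n * z^n * (Complex.exp (v z))^n * g (φ z) := by ring
    rw [hlhs, hrhs]
    have hcn : c^n = (g 0)⁻¹ * c := by
      conv_lhs => rw [show n = (n-1) + 1 by omega]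
      rw [pow_succ, hc_pow]
    rw [hcn]
    field_simp
  -- injectivity near 0
  have hvan : AnalyticAt ℂ (⇑v) 0 := hvd.analyticAt (isOpen_ball.mem_nhds (mem_ball_self hδpos))
  obtain ⟨p, hp⟩ := hvan
  have hvs : HasStrictDerivAt (⇑v) (deriv (⇑v) 0) 0 := by
    have h := hp.hasStrictDerivAt
    rwa [← hp.deriv] at h
  have hφs : HasStrictDerivAt φ c 0 := by
    have h1 : HasStrictDerivAt (fun z : ℂ => c * z) c 0 := by
      simpa using (hasStrictDerivAt_id (0:ℂ)).const_mul c
    have h2 : HasStrictDerivAt (fun z : ℂ => Complex.exp (v z))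
        (Complex.exp (v 0) * deriv (⇑v) 0) 0 := hvs.cexp
    have h3 := h1.mul h2
    rw [hφ_def]
    have hv00 : v 0 = 0 := hv0
    exact h3.congr_deriv (by simp [hv00])
  have hfd := (hφs.hasStrictFDerivAt_equiv hc).eventually_left_inverse
  rcases Metric.mem_nhds_iff.mp hfd with ⟨ε, hε0, hsub⟩
  refine ⟨min δ ε, lt_min hδpos hε0, φ,
    hφdiff.mono (ball_subset_ball (min_le_left _ _)), ?_, hφ0, ?_⟩
  · intro a ha b hb hab
    have ha' := hsub (ball_subset_ball (min_le_right _ _) ha)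
    have hb' := hsub (ball_subset_ball (min_le_right _ _) hb)
    simp only [Set.mem_setOf_eq] at ha' hb'
    rw [← ha', ← hb', hab]
  · intro z hz
    exact hfe z (ball_subset_ball (min_le_left _ _) hz)
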